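/- Let m ≥ 2 be an integer and let k be a positive multiple of m. Let S be a finite set of k points in ℝ² and let A ⊆ S with |A| = k/m be such that every point of A has x-coordinate at most the x-coordinate of every point of S∖A. Then w_x(A) ≤ w_x(S)/(m−1). (This bounds the intra-strip x-weight of an extreme strip containing a 1/m fraction of the points.) -/

import Mathlib

open Finset

/-- The sum of x-coordinate distances over all unordered pairs of distinct points of `S`. -/
noncomputable def wx (S : Finset (Fin 2 → ℝ)) : ℝ := (∑ p ∈ S, ∑ q ∈ S, |p 0 - q 0|) / 2

/-- If `A` consists of `k/m` points of a `k`-point set `S` (with `m ≥ 2` and `m ∣ k`) and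
every point of `A` has x-coordinate at most that of every point of `S∖A`, then the
intra-strip x-weight of `A` satisfies `w_x(A) ≤ w_x(S)/(m−1)`. -/
theorem end_strip_bound
    (m k : ℕ) (hm : 2 ≤ m) (hk : 0 < k) (hmk : m ∣ k)
    (S : Finset (Fin 2 → ℝ)) (hScard : S.card = k)
    (A : Finset (Fin 2 → ℝ)) (hA : A ⊆ S) (hAcard : A.card = k / m)
    (hext : ∀ p ∈ A, ∀ q ∈ S \ A, p 0 ≤ q 0) :
    wx A ≤ wx S / ((m : ℝ) - 1) := by
  classical
  set B := S \ A with hB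
  have hdisj : Disjoint A B := Finset.disjoint_sdiff
  have hunion : S = A ∪ B := (Finset.union_sdiff_of_subset hA).symm
  obtain ⟨t, ht⟩ := hmk
  have hm0 : 0 < m := by omega
  have htA : A.card = t := by rw [hAcard, ht, Nat.mul_div_cancel_left _ hm0]
  have htpos : 0 < t := Nat.pos_of_ne_zero fun h => by subst h; simp at ht; omega
  have hBcard : B.card = (m - 1) * t := by
    rw [hB, card_sdiff_of_subset hA, hScard, htA, ht]
    cases m with
    | zero => omega
    | succ n => simp [Nat.succ_mul]
  set a := ∑ p ∈ A, ∑ q ∈ A, |p 0 - q 0| with ha_def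
  set b := ∑ p ∈ B, ∑ q ∈ B, |p 0 - q 0| with hb_def
  set c := ∑ p ∈ A, ∑ q ∈ B, |p 0 - q 0| with hc_def
  have ha0 : 0 ≤ a := Finset.sum_nonneg fun p _ =>
    Finset.sum_nonneg fun q _ => abs_nonneg _
  have hb0 : 0 ≤ b := Finset.sum_nonneg fun p _ =>
    Finset.sum_nonneg fun q _ => abs_nonneg _
  have hcomm : ∑ p ∈ B, ∑ q ∈ A, |p 0 - q 0| = c := by
    rw [Finset.sum_comm]
    apply Finset.sum_congr rfl
    intro p _
    apply Finset.sum_congr rfl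
    intro q _
    exact abs_sub_comm _ _
  have hT : ∑ p ∈ S, ∑ q ∈ S, |p 0 - q 0| = a + b + 2 * c := by
    rw [hunion, Finset.sum_union hdisj]
    have h1 : ∀ p : Fin 2 → ℝ, ∑ q ∈ A ∪ B, |p 0 - q 0|
        = ∑ q ∈ A, |p 0 - q 0| + ∑ q ∈ B, |p 0 - q 0| :=
      fun p => Finset.sum_union hdisj
    simp only [h1, Finset.sum_add_distrib]
    rw [hcomm]
    ring
  -- triangle inequality: (B.card) * a ≤ 2 * A.card * c
  have hkey : (B.card : ℝ) * a ≤ 2 * (A.card : ℝ) * c := by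
    have step : ∀ p ∈ A, ∀ q ∈ A, (B.card : ℝ) * |p 0 - q 0|
        ≤ ∑ r ∈ B, (|p 0 - r 0| + |q 0 - r 0|) := by
      intro p _ q _
      calc (B.card : ℝ) * |p 0 - q 0| = ∑ _r ∈ B, |p 0 - q 0| := by
            rw [Finset.sum_const, nsmul_eq_mul]
        _ ≤ ∑ r ∈ B, (|p 0 - r 0| + |q 0 - r 0|) := by
            apply Finset.sum_le_sum
            intro r _
            have : |p 0 - q 0| = |(p 0 - r 0) - (q 0 - r 0)| := by ring_nf
            rw [this]
            exact abs_sub _ _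
    calc (B.card : ℝ) * a = ∑ p ∈ A, ∑ q ∈ A, (B.card : ℝ) * |p 0 - q 0| := by
          rw [ha_def, Finset.mul_sum]
          apply Finset.sum_congr rfl
          intro p _
          rw [Finset.mul_sum]
      _ ≤ ∑ p ∈ A, ∑ q ∈ A, ∑ r ∈ B, (|p 0 - r 0| + |q 0 - r 0|) := by
          apply Finset.sum_le_sum
          intro p hp
          exact Finset.sum_le_sum fun q hq => step p hp q hq
      _ = 2 * (A.card : ℝ) * c := by
          simp only [Finset.sum_add_distrib]
          rw [hc_def]
          have h2 : ∑ p ∈ A, ∑ q ∈ A, ∑ r ∈ B, |p 0 - r 0|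
              = (A.card : ℝ) * ∑ p ∈ A, ∑ r ∈ B, |p 0 - r 0| := by
            rw [Finset.mul_sum]
            apply Finset.sum_congr rfl
            intro p _
            rw [Finset.sum_const, nsmul_eq_mul]
          have h3 : ∑ p ∈ A, ∑ q ∈ A, ∑ r ∈ B, |q 0 - r 0|
              = (A.card : ℝ) * ∑ q ∈ A, ∑ r ∈ B, |q 0 - r 0| := by
            rw [Finset.sum_const, nsmul_eq_mul]
          rw [h2, h3]
          ring
  have hcardA : (A.card : ℝ) = t := by rw [htA]
  have hcardB : (B.card : ℝ) = ((m : ℝ) - 1) * t := by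
    rw [hBcard]
    push_cast [Nat.cast_sub (by omega : 1 ≤ m)]
    ring
  have htR : (0 : ℝ) < t := by exact_mod_cast htpos
  -- from hkey: (m-1) * a ≤ 2 * c
  have hma : ((m : ℝ) - 1) * a ≤ 2 * c := by
    have h := hkey
    rw [hcardA, hcardB] at h
    have : ((m : ℝ) - 1) * a * t ≤ 2 * c * t := by nlinarith
    exact le_of_mul_le_mul_right this htR
  have hm1 : (0 : ℝ) < (m : ℝ) - 1 := by
    have : (2 : ℝ) ≤ m := by exact_mod_cast hm
    linarith
  rw [wx, wx, hT, div_div, le_div_iff₀ (by positivity)]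
  nlinarith
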